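/- Let X be a discrete topological space, let η > 0, and let d ∈ Met(X). Then there exists a metric e ∈ Met(X) such that sup_{x,y∈X} |d(x,y) − e(x,y)| ≤ η, and for all distinct x, y ∈ X the value e(x,y) lies in η·ℤ≥0 = {η·n : n ∈ ℤ, n ≥ 0} and satisfies η ≤ e(x,y). -/
import Mathlib


open Set
open scoped ENNReal

/-- The space `Met(X)` of metrics generating the topology of `X`. -/
def MetricCompat (X : Type*) [t : TopologicalSpace X] : Type _ :=
  { m : MetricSpace X // m.toUniformSpace.toTopologicalSpace = t }

namespace MetricCompat

variable {X : Type*} [TopologicalSpace X]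

/-- The distance function of an element of `Met(X)`. -/
noncomputable def dist (d : MetricCompat X) (x y : X) : ℝ := d.1.dist x y

/-- The supremum distance `D_X`, valued in `[0,∞]`. -/
noncomputable def supDist (d e : MetricCompat X) : ℝ≥0∞ :=
  ⨆ p : X × X, ENNReal.ofReal |d.dist p.1 p.2 - e.dist p.1 p.2|

/-- The topology on `Met(X)` induced by the open balls of `D_X`. -/
noncomputable instance : TopologicalSpace (MetricCompat X) :=
  TopologicalSpace.generateFrom
    { U | ∃ (d : MetricCompat X) (r : ℝ≥0∞), 0 < r ∧ U = { e | supDist d e < r } }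

end MetricCompat

/-- A space is strongly `0`-dimensional if disjoint closed sets are separated by a clopen set. -/
def StronglyZeroDim (X : Type*) [TopologicalSpace X] : Prop :=
  ∀ A B : Set X, IsClosed A → IsClosed B → Disjoint A B →
    ∃ V : Set X, IsClopen V ∧ A ⊆ V ∧ Disjoint V B

/-- Proposition 2.6: on a discrete space `X`, every `d ∈ Met(X)` is `η`-approximated by a
metric `e ∈ Met(X)` whose nonzero values lie in `η·ℤ≥0` and are at least `η`. -/
theorem discrete_approx_by_eta_integer_valued_metric
    {X : Type*} [TopologicalSpace X] [DiscreteTopology X]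
    (η : ℝ) (hη : 0 < η) (d : MetricCompat X) :
    ∃ e : MetricCompat X,
      (⨆ p : X × X, ENNReal.ofReal |d.dist p.1 p.2 - e.dist p.1 p.2|) ≤ ENNReal.ofReal η ∧
      ∀ x y : X, x ≠ y → (∃ n : ℕ, e.dist x y = η * n) ∧ η ≤ e.dist x y := by
  classical
  set f : X → X → ℝ := fun x y => if x = y then 0 else η * ⌈d.dist x y / η⌉₊ with hf
  have dnonneg : ∀ x y : X, 0 ≤ d.dist x y := fun x y => by
    letI := d.1; exact dist_nonneg
  have dself : ∀ x : X, d.dist x x = 0 := fun x => by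
    letI := d.1; exact dist_self x
  have dcomm : ∀ x y : X, d.dist x y = d.dist y x := fun x y => by
    letI := d.1; exact dist_comm x y
  have dtri : ∀ x y z : X, d.dist x z ≤ d.dist x y + d.dist y z := fun x y z => by
    letI := d.1; exact dist_triangle x y z
  have dpos : ∀ x y : X, x ≠ y → 0 < d.dist x y := fun x y h => by
    refine lt_of_le_of_ne (dnonneg x y) (fun h0 => h ?_)
    letI := d.1; exact eq_of_dist_eq_zero h0.symm
  have fnonneg : ∀ x y : X, 0 ≤ f x y := by
    intro x y
    simp only [hf]
    split
    · exact le_refl 0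
    · exact mul_nonneg hη.le (Nat.cast_nonneg _)
  have fge : ∀ x y : X, x ≠ y → η ≤ f x y := by
    intro x y h
    simp only [hf, if_neg h]
    have h1 : (1 : ℕ) ≤ ⌈d.dist x y / η⌉₊ := by
      rw [Nat.one_le_ceil_iff]
      exact div_pos (dpos x y h) hη
    calc η = η * 1 := by ring
      _ ≤ η * ⌈d.dist x y / η⌉₊ := by
          apply mul_le_mul_of_nonneg_left _ hη.le
          exact_mod_cast h1
  have fle : ∀ x y : X, d.dist x y ≤ f x y := by
    intro x y
    by_cases h : x = y
    · subst h; simp [hf, dself x]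
    · simp only [hf, if_neg h]
      have := Nat.le_ceil (d.dist x y / η)
      calc d.dist x y = η * (d.dist x y / η) := by field_simp
        _ ≤ η * ⌈d.dist x y / η⌉₊ := mul_le_mul_of_nonneg_left this hη.le
  have fclose : ∀ x y : X, f x y ≤ d.dist x y + η := by
    intro x y
    by_cases h : x = y
    · subst h; simp only [hf, if_pos rfl]; linarith [dnonneg x x]
    · simp only [hf, if_neg h]
      have hc : (⌈d.dist x y / η⌉₊ : ℝ) < d.dist x y / η + 1 :=
        Nat.ceil_lt_add_one (div_nonneg (dnonneg x y) hη.le)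
      have h2 := mul_lt_mul_of_pos_left hc hη
      have h3 : η * (d.dist x y / η + 1) = d.dist x y + η := by field_simp
      linarith
  have fcomm : ∀ x y : X, f x y = f y x := by
    intro x y
    simp only [hf]
    by_cases h : x = y
    · simp [h]
    · rw [if_neg h, if_neg (Ne.symm h), dcomm]
  have ftri : ∀ x y z : X, f x z ≤ f x y + f y z := by
    intro x y z
    by_cases hxz : x = z
    · simp only [hf, if_pos hxz]
      exact add_nonneg (fnonneg x y) (fnonneg y z)
    by_cases hxy : x = y
    · subst hxy; simp [hf, hxz]
    by_cases hyz : y = z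
    · subst hyz; simp [hf, hxz]
    simp only [hf, if_neg hxz, if_neg hxy, if_neg hyz]
    rw [← mul_add]
    apply mul_le_mul_of_nonneg_left _ hη.le
    have h1 : ⌈d.dist x z / η⌉₊ ≤ ⌈d.dist x y / η + d.dist y z / η⌉₊ := by
      apply Nat.ceil_le_ceil
      rw [← add_div]
      gcongr
      exact dtri x y z
    have h2 := Nat.ceil_add_le (d.dist x y / η) (d.dist y z / η)
    exact_mod_cast le_trans h1 h2
  have feq : ∀ x y : X, f x y = 0 → x = y := by
    intro x y h0
    by_contra hne
    have := fge x y hne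
    rw [h0] at this
    exact absurd this (not_le.mpr hη)
  -- Build the metric space
  let m : MetricSpace X := MetricSpace.ofDistTopology f
    (fun x => by simp [hf]) fcomm ftri
    (fun s => by
      constructor
      · intro _ x hx
        refine ⟨η, hη, fun y hy => ?_⟩
        by_contra hys
        have hne : x ≠ y := fun h => hys (h ▸ hx)
        exact absurd hy (not_lt.mpr (fge x y hne))
      · intro _
        exact isOpen_discrete s)
    feq
  refine ⟨⟨m, rfl⟩, ?_, ?_⟩
  · apply iSup_le
    rintro ⟨x, y⟩
    apply ENNReal.ofReal_le_ofReal
    show |d.dist x y - f x y| ≤ η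
    rw [abs_le]
    constructor
    · have := fclose x y
      show -η ≤ d.dist x y - f x y
      linarith
    · have := fle x y
      show d.dist x y - f x y ≤ η
      linarith
  · intro x y hne
    show (∃ n : ℕ, f x y = η * (n : ℝ)) ∧ η ≤ f x y
    refine ⟨⟨⌈d.dist x y / η⌉₊, ?_⟩, fge x y hne⟩
    simp [hf, if_neg hne]
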